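/- For the genus-2 map defined by the four relations d_{n+1}(e_{n+1}+v_{n+1}+v_n) = d_n(e_n+v_n+v_{n-1}), v_n(d_{n+1}e_{n+1} − d_n e_n) = d_{n+1}w_{n+1} − d_n w_{n-1}, d_{n+1} + d_n + f = w_n − v_n², and d_{n+1}e_{n+1} + d_n e_n + g = v_n w_n, together with the constraints (3.14)–(3.17): d_n(e_n + v_n + v_{n-1}) = 0, u = d_n(d_n − v_n v_{n-1} − w_n − w_{n-1} + f), the quantities H₁ = d_n(2 d_n e_n + v_n w_{n-1} + v_{n-1} w_n + f e_n + g) and H₂ = d_n(d_n e_n² − w_n w_{n-1} + g e_n) are conserved: H₁ and H₂ take the same value at step n+1 as at step n. -/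
import Mathlib

/-- Conservation of the genus-2 first integrals `H₁ = −uv` and `H₂ = uw`:
under the genus-2 relations (3.10)–(3.13) and the spectral-curve constraints
(3.14)–(3.15), the quantities
`H₁ = dₙ(2 dₙ eₙ + vₙ w_{n-1} + v_{n-1} wₙ + f eₙ + g)` and
`H₂ = dₙ(dₙ eₙ² − wₙ w_{n-1} + g eₙ)` take the same value at step `n+1` as at step `n`. -/
theorem genus2_first_integrals {K : Type*} [Field K] (f g u : K)
    (d e v w : ℤ → K) (hd : ∀ n, d n ≠ 0)
    (h1 : ∀ n : ℤ, d (n + 1) * (e (n + 1) + v (n + 1) + v n) = d n * (e n + v n + v (n - 1)))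
    (h2 : ∀ n : ℤ, v n * (d (n + 1) * e (n + 1) - d n * e n) = d (n + 1) * w (n + 1) - d n * w (n - 1))
    (h3 : ∀ n : ℤ, d (n + 1) + d n + f = w n - (v n) ^ 2)
    (h4 : ∀ n : ℤ, d (n + 1) * e (n + 1) + d n * e n + g = v n * w n)
    (h5 : ∀ n : ℤ, d n * (e n + v n + v (n - 1)) = 0)
    (h6 : ∀ n : ℤ, u = d n * (d n - v n * v (n - 1) - w n - w (n - 1) + f)) :
    ∀ n : ℤ,
      d (n + 1) * (2 * d (n + 1) * e (n + 1) + v (n + 1) * w n + v n * w (n + 1)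
          + f * e (n + 1) + g)
        = d n * (2 * d n * e n + v n * w (n - 1) + v (n - 1) * w n + f * e n + g) ∧
      d (n + 1) * (d (n + 1) * (e (n + 1)) ^ 2 - w (n + 1) * w n + g * e (n + 1))
        = d n * (d n * (e n) ^ 2 - w n * w (n - 1) + g * e n) := by
  intro n
  have hE : ∀ m : ℤ, e m + v m + v (m - 1) = 0 := fun m =>
    (mul_eq_zero.mp (h5 m)).resolve_left (hd m)
  have hE1 : e n + v n + v (n - 1) = 0 := hE n
  have hE2 : e (n + 1) + v (n + 1) + v n = 0 := by
    have := hE (n + 1)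
    simpa using this
  set a := d n
  set b := d (n + 1)
  set v0 := v (n - 1)
  set v1 := v n
  set v2 := v (n + 1)
  set w0 := w (n - 1)
  set w1 := w n
  set w2 := w (n + 1)
  set e1 := e n
  set e2 := e (n + 1)
  constructor
  · linear_combination (-v1) * h2 n
      + (a * v1 + a * v0 - b * v2 - b * v1) * h3 n
      + (b - a) * h4 n
      + (b * (f + v1 ^ 2 + b + a)) * hE2
      + (-(a * (f + v1 ^ 2 + b + a))) * hE1
  · linear_combination (f + v1 ^ 2 + b + a) * h2 n
      + (b * w2 + b * v1 * v2 + b * v1 ^ 2 - a * w0 - a * v1 ^ 2 - a * v0 * v1) * h3 n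
      + (a * v1 + a * v0 - b * v2 - b * v1) * h4 n
      + (b * g - b * v1 * f - b * v1 ^ 3 + b ^ 2 * e2 - b ^ 2 * v1 - 2 * a * b * v1
          - a * b * v0) * hE2
      + (-(a * g) + a * v1 * f + a * v1 ^ 3 + a * b * v2 + 2 * a * b * v1 - a ^ 2 * e1
          + a ^ 2 * v1) * hE1
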